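/- Let c₂ = 2/(√2 − 1)². Let z ∈ (0,1) and let (Z_n)_{n≥0} be measurable functions Z_n : Ω → [0,1] with Z₀ ≡ z such that for every n ≥ 0 and every ω ∈ Ω: Z_{n+1}(ω) ≥ Z_n(ω)² if ω(n+1) = 1, and Z_{n+1}(ω) ≥ Z_n(ω)·√(2 − Z_n(ω)²) if ω(n+1) = 0. Then μ{ ω : Z_n(ω) → 0 as n → ∞ } ≤ c₂·(1 − z²)·( 1 + log₂( 1/(1 − z²) ) ). -/
import Mathlib

open MeasureTheory Filter Topology
open scoped Classical

/-- `μ` is the i.i.d. Bernoulli(1/2) product measure on `{0,1}^ℕ`,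
characterized by its values on cylinder sets. -/
def IsBernoulliHalf (μ : Measure (ℕ → Bool)) : Prop :=
  ∀ (n : ℕ) (b : Fin n → Bool), μ {ω | ∀ i : Fin n, ω i = b i} = (2 : ENNReal)⁻¹ ^ n

/-- one step of the logarithmic lower-bound process -/
noncomputable def bstep (v : ℝ) (b : Bool) : ℝ := if b then v - 1 else 2 * v

/-- deterministic lower-bound process driven by the bits -/
noncomputable def BL (v : ℝ) : ℕ → (ℕ → Bool) → ℝ
  | 0, _ => v
  | (k+1), ω => bstep (BL v k ω) (ω k)

/-- count of length-`n` bit strings along which the process hits `≤ 1` -/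
noncomputable def bcnt : ℕ → ℝ → ℕ
  | 0, v => if v ≤ 1 then 1 else 0
  | (n+1), v => if v ≤ 1 then 2^(n+1) else bcnt n (v-1) + bcnt n (2*v)

lemma half_add_le (v : ℝ) : 1/2 + v ≤ (2:ℝ) ^ v := by
  have hlog : (0.6931471803 : ℝ) < Real.log 2 := Real.log_two_gt_d9
  rcases le_or_gt v 1 with hv | hv
  · have h1 : Real.log 2 * v + 1 ≤ Real.exp (Real.log 2 * v) := Real.add_one_le_exp _
    have h2 : (2:ℝ) ^ v = Real.exp (Real.log 2 * v) := Real.rpow_def_of_pos two_pos v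
    rw [h2]
    have hlog2 : Real.log 2 < (0.6931471808 : ℝ) := Real.log_two_lt_d9
    nlinarith [mul_le_mul_of_nonneg_right (sub_nonneg.mpr hv) (by nlinarith : (0:ℝ) ≤ 1 - Real.log 2)]
  · have h1 : Real.log 2 * (v-1) + 1 ≤ Real.exp (Real.log 2 * (v-1)) := Real.add_one_le_exp _
    have h2 : (2:ℝ) ^ v = 2 * Real.exp (Real.log 2 * (v-1)) := by
      rw [Real.rpow_def_of_pos two_pos,
        show Real.log 2 * v = Real.log 2 + Real.log 2 * (v-1) by ring, Real.exp_add,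
        Real.exp_log two_pos]
    rw [h2]
    nlinarith

lemma one_le_X {v : ℝ} (h0 : 0 < v) (h1 : v ≤ 1) :
    1 ≤ 2*(1+v)*(2:ℝ)^(-v) := by
  have hmono : (2:ℝ)^(-1:ℝ) ≤ (2:ℝ)^(-v) :=
    Real.rpow_le_rpow_left_iff (by norm_num : (1:ℝ) < 2) |>.mpr (by linarith)
  have : (2:ℝ)^(-1:ℝ) = 1/2 := by
    rw [Real.rpow_neg_one]; norm_num
  rw [this] at hmono
  nlinarith [Real.rpow_pos_of_pos (by norm_num : (0:ℝ) < 2) (-v)]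

lemma bcnt_le (n : ℕ) : ∀ v : ℝ, 0 < v →
    (bcnt n v : ℝ) ≤ 2^n * min 1 (2*(1+v)*(2:ℝ)^(-v)) := by
  induction n with
  | zero =>
    intro v hv
    by_cases h : v ≤ 1
    · simp only [bcnt, if_pos h, Nat.cast_one, pow_zero, one_mul]
      exact le_min le_rfl (one_le_X hv h)
    · simp only [bcnt, if_neg h, Nat.cast_zero, pow_zero, one_mul]
      have := Real.rpow_pos_of_pos (by norm_num : (0:ℝ) < 2) (-v)
      have hvpos : (0:ℝ) < 1 + v := by linarith
      positivity
  | succ n ih =>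
    intro v hv
    by_cases h : v ≤ 1
    · simp only [bcnt, if_pos h]
      have hmin : min 1 (2*(1+v)*(2:ℝ)^(-v)) = 1 := min_eq_left (one_le_X hv h)
      rw [hmin]
      push_cast
      norm_num
    · have hv1 : 1 < v := not_le.mp h
      simp only [bcnt, if_neg h]
      have h1 := ih (v-1) (by linarith)
      have h2 := ih (2*v) (by linarith)
      push_cast
      have key : min 1 (2*(1+(v-1))*(2:ℝ)^(-(v-1))) + min 1 (2*(1+2*v)*(2:ℝ)^(-(2*v)))
          ≤ 2 * min 1 (2*(1+v)*(2:ℝ)^(-v)) := by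
        have hX1 : min 1 (2*(1+(v-1))*(2:ℝ)^(-(v-1))) ≤ 2*(1+(v-1))*(2:ℝ)^(-(v-1)) :=
          min_le_right _ _
        have hX2 : min 1 (2*(1+2*v)*(2:ℝ)^(-(2*v))) ≤ 2*(1+2*v)*(2:ℝ)^(-(2*v)) :=
          min_le_right _ _
        have hw : (0:ℝ) < (2:ℝ)^(-v) := Real.rpow_pos_of_pos (by norm_num) _
        have hkey : (2:ℝ)^(-v) * (1/2 + v) ≤ 1 := by
          have h := half_add_le v
          have hinv : (2:ℝ)^(-v) * (2:ℝ)^v = 1 := by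
            rw [← Real.rpow_add (by norm_num : (0:ℝ) < 2)]; simp
          nlinarith
        have e1 : (2:ℝ)^(-(v-1)) = 2 * (2:ℝ)^(-v) := by
          rw [show -(v-1) = 1 + -v by ring, Real.rpow_add (by norm_num : (0:ℝ) < 2),
            Real.rpow_one]
        have e2 : (2:ℝ)^(-(2*v)) = (2:ℝ)^(-v) * (2:ℝ)^(-v) := by
          rw [← Real.rpow_add (by norm_num : (0:ℝ) < 2)]; ring_nf
        have hsum : 2*(1+(v-1))*(2:ℝ)^(-(v-1)) + 2*(1+2*v)*(2:ℝ)^(-(2*v))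
            ≤ 2 * (2*(1+v)*(2:ℝ)^(-v)) := by rw [e1, e2]; nlinarith
        rcases le_total (1:ℝ) (2*(1+v)*(2:ℝ)^(-v)) with hc | hc
        · rw [min_eq_left hc]
          have := min_le_left (1:ℝ) (2*(1+(v-1))*(2:ℝ)^(-(v-1)))
          have := min_le_left (1:ℝ) (2*(1+2*v)*(2:ℝ)^(-(2*v)))
          linarith
        · rw [min_eq_right hc]
          linarith
      calc (bcnt n (v-1) : ℝ) + bcnt n (2*v)
          ≤ 2^n * min 1 (2*(1+(v-1))*(2:ℝ)^(-(v-1)))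
            + 2^n * min 1 (2*(1+2*v)*(2:ℝ)^(-(2*v))) := add_le_add h1 h2
        _ = 2^n * (min 1 (2*(1+(v-1))*(2:ℝ)^(-(v-1))) + min 1 (2*(1+2*v)*(2:ℝ)^(-(2*v)))) := by
            ring
        _ ≤ 2^n * (2 * min 1 (2*(1+v)*(2:ℝ)^(-v))) := by
            have : (0:ℝ) ≤ 2^n := by positivity
            exact mul_le_mul_of_nonneg_left key this
        _ = 2^(n+1) * min 1 (2*(1+v)*(2:ℝ)^(-v)) := by ring

lemma BL_congr (v : ℝ) : ∀ (k : ℕ) (ω ω' : ℕ → Bool), (∀ i, i < k → ω i = ω' i) →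
    BL v k ω = BL v k ω'
  | 0, _, _, _ => rfl
  | (k+1), ω, ω', h => by
    simp only [BL]
    rw [BL_congr v k ω ω' (fun i hi => h i (hi.trans (Nat.lt_succ_self k))),
      h k (Nat.lt_succ_self k)]

lemma BL_succ (v : ℝ) : ∀ (k : ℕ) (ω : ℕ → Bool),
    BL v (k+1) ω = BL (bstep v (ω 0)) k (fun i => ω (i+1))
  | 0, ω => rfl
  | (k+1), ω => by
    have h1 : BL v (k+1+1) ω = bstep (BL v (k+1) ω) (ω (k+1)) := rfl
    rw [h1, BL_succ v k ω]
    rfl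

/-- extend a finite bit string by `false` -/
noncomputable def extb (n : ℕ) (s : Fin n → Bool) : ℕ → Bool :=
  fun i => if h : i < n then s ⟨i, h⟩ else false

/-- the hitting predicate on finite strings -/
def QQ (v : ℝ) (n : ℕ) (s : Fin n → Bool) : Prop := ∃ k ≤ n, BL v k (extb n s) ≤ 1

lemma extb_cons_zero (n : ℕ) (b : Bool) (t : Fin n → Bool) :
    extb (n+1) (Fin.cons b t) 0 = b := by
  simp [extb]

lemma extb_cons_shift (n : ℕ) (b : Bool) (t : Fin n → Bool) :
    (fun i => extb (n+1) (Fin.cons b t) (i+1)) = extb n t := by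
  funext i
  simp only [extb]
  by_cases h : i < n
  · rw [dif_pos (by omega : i + 1 < n + 1), dif_pos h]
    have : (⟨i+1, by omega⟩ : Fin (n+1)) = Fin.succ ⟨i, h⟩ := rfl
    rw [this, Fin.cons_succ]
  · rw [dif_neg (by omega), dif_neg h]

lemma QQ_cons {v : ℝ} (hv : 1 < v) (n : ℕ) (b : Bool) (t : Fin n → Bool) :
    QQ v (n+1) (Fin.cons b t) ↔ QQ (bstep v b) n t := by
  constructor
  · rintro ⟨k, hk, hle⟩
    cases k with
    | zero => exact absurd hle (by simpa [BL] using hv)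
    | succ j =>
      refine ⟨j, by omega, ?_⟩
      rw [BL_succ, extb_cons_zero, extb_cons_shift] at hle
      exact hle
  · rintro ⟨j, hj, hle⟩
    refine ⟨j+1, by omega, ?_⟩
    rw [BL_succ, extb_cons_zero, extb_cons_shift]
    exact hle

lemma card_le_bcnt (n : ℕ) : ∀ v : ℝ,
    (Finset.univ.filter (QQ v n)).card ≤ bcnt n v := by
  induction n with
  | zero =>
    intro v
    by_cases h : v ≤ 1
    · simp only [bcnt, if_pos h]
      calc (Finset.univ.filter (QQ v 0)).card ≤ (Finset.univ : Finset (Fin 0 → Bool)).card :=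
            Finset.card_filter_le _ _
        _ = 1 := by simp
    · simp only [bcnt, if_neg h]
      have : Finset.univ.filter (QQ v 0) = ∅ := by
        refine Finset.filter_false_of_mem ?_
        rintro s - ⟨k, hk, hle⟩
        interval_cases k
        exact h hle
      rw [this]
      simp
  | succ n ih =>
    intro v
    by_cases h : v ≤ 1
    · simp only [bcnt, if_pos h]
      calc (Finset.univ.filter (QQ v (n+1))).card
          ≤ (Finset.univ : Finset (Fin (n+1) → Bool)).card := Finset.card_filter_le _ _
        _ = 2^(n+1) := by simp
    · have hv1 : 1 < v := not_le.mp h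
      simp only [bcnt, if_neg h]
      have hsplit : (Finset.univ.filter (QQ v (n+1))).card
          = (Finset.univ.filter (fun t => QQ v (n+1) (Fin.cons true t))).card
            + (Finset.univ.filter (fun t => QQ v (n+1) (Fin.cons false t))).card := by
        rw [Finset.card_filter, Finset.card_filter, Finset.card_filter]
        rw [← Fintype.sum_equiv (Fin.consEquiv (fun _ : Fin (n+1) => Bool))
          (fun p => if QQ v (n+1) (Fin.cons p.1 p.2) then 1 else 0)
          (fun s => if QQ v (n+1) s then 1 else 0) (fun p => rfl)]
        rw [Fintype.sum_prod_type, Fintype.sum_bool]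
      rw [hsplit]
      have h1 : (Finset.univ.filter (fun t => QQ v (n+1) (Fin.cons true t))).card
          ≤ bcnt n (v-1) := by
        have heq : Finset.univ.filter (fun t => QQ v (n+1) (Fin.cons true t))
            = Finset.univ.filter (QQ (v-1) n) := by
          refine Finset.filter_congr ?_
          intro t _
          rw [QQ_cons hv1 n true t]
          simp [bstep]
        rw [heq]; exact ih (v-1)
      have h2 : (Finset.univ.filter (fun t => QQ v (n+1) (Fin.cons false t))).card
          ≤ bcnt n (2*v) := by
        have heq : Finset.univ.filter (fun t => QQ v (n+1) (Fin.cons false t))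
            = Finset.univ.filter (QQ (2*v) n) := by
          refine Finset.filter_congr ?_
          intro t _
          rw [QQ_cons hv1 n false t]
          simp [bstep]
        rw [heq]; exact ih (2*v)
      omega

lemma meas_pred_le (μ : Measure (ℕ → Bool)) (hμ : IsBernoulliHalf μ)
    (n : ℕ) (P : (Fin n → Bool) → Prop) :
    μ {ω | P (fun i => ω i)} ≤ (Finset.univ.filter P).card * (2:ENNReal)⁻¹ ^ n := by
  have hsub : {ω : ℕ → Bool | P (fun i => ω i)}
      ⊆ ⋃ s ∈ Finset.univ.filter P, {ω : ℕ → Bool | ∀ i : Fin n, ω i = s i} := by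
    intro ω hω
    have hm : (fun i : Fin n => ω i) ∈ Finset.univ.filter P :=
      Finset.mem_filter.mpr ⟨Finset.mem_univ _, hω⟩
    exact Set.mem_iUnion₂.mpr ⟨_, hm, fun i => rfl⟩
  calc μ {ω | P (fun i => ω i)}
      ≤ μ (⋃ s ∈ Finset.univ.filter P, {ω : ℕ → Bool | ∀ i : Fin n, ω i = s i}) :=
        measure_mono hsub
    _ ≤ ∑ s ∈ Finset.univ.filter P, μ {ω : ℕ → Bool | ∀ i : Fin n, ω i = s i} :=
        measure_biUnion_finset_le _ _
    _ = ∑ s ∈ Finset.univ.filter P, (2:ENNReal)⁻¹ ^ n :=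
        Finset.sum_congr rfl (fun s _ => hμ n s)
    _ = (Finset.univ.filter P).card * (2:ENNReal)⁻¹ ^ n := by
        rw [Finset.sum_const, nsmul_eq_mul]

theorem stmt12 (μ : Measure (ℕ → Bool)) [IsProbabilityMeasure μ] (hμ : IsBernoulliHalf μ)
    (z : ℝ) (hz : z ∈ Set.Ioo (0:ℝ) 1)
    (Z : ℕ → (ℕ → Bool) → ℝ) (hZmeas : ∀ n, Measurable (Z n))
    (hZrange : ∀ n ω, Z n ω ∈ Set.Icc (0:ℝ) 1)
    (hZ0 : ∀ ω, Z 0 ω = z)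
    (hrec : ∀ (n : ℕ) (ω : ℕ → Bool),
      (ω n = true → (Z n ω) ^ 2 ≤ Z (n + 1) ω) ∧
      (ω n = false → Z n ω * Real.sqrt (2 - (Z n ω) ^ 2) ≤ Z (n + 1) ω)) :
    μ {ω | Tendsto (fun n => Z n ω) atTop (nhds 0)} ≤
      ENNReal.ofReal ((2 / (Real.sqrt 2 - 1) ^ 2) * (1 - z ^ 2) *
        (1 + Real.logb 2 (1 / (1 - z ^ 2)))) := by
  obtain ⟨hz0, hz1⟩ := hz
  set u : ℝ := 1 - z^2 with hu_def
  have hu0 : 0 < u := by simp only [hu_def]; nlinarith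
  have hu1 : u < 1 := by simp only [hu_def]; nlinarith
  set v₀ : ℝ := Real.logb 2 (1/u) with hv_def
  have hv₀ : 0 < v₀ := Real.logb_pos one_lt_two ((one_lt_div hu0).mpr hu1)
  have hpow : (2:ℝ)^(-v₀) = u := by
    rw [hv_def, one_div, Real.logb_inv, neg_neg]
    exact Real.rpow_logb two_pos (by norm_num) hu0
  -- the invariant
  have hinv : ∀ ω n, 1 - (Z n ω)^2 ≤ (2:ℝ)^(-(BL v₀ n ω)) := by
    intro ω n
    induction n with
    | zero =>
      have : BL v₀ 0 ω = v₀ := rfl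
      rw [this, hpow, hZ0 ω]
    | succ n ih =>
      obtain ⟨hx0, hx1⟩ := hZrange n ω
      obtain ⟨hy0, hy1⟩ := hZrange (n+1) ω
      have hw : (0:ℝ) < (2:ℝ)^(-(BL v₀ n ω)) := Real.rpow_pos_of_pos two_pos _
      cases hb : ω n with
      | true =>
        have h1 : (Z n ω)^2 ≤ Z (n+1) ω := (hrec n ω).1 hb
        have h2 : ((Z n ω)^2)^2 ≤ (Z (n+1) ω)^2 := pow_le_pow_left₀ (sq_nonneg _) h1 2
        have hL : BL v₀ (n+1) ω = BL v₀ n ω - 1 := by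
          show bstep (BL v₀ n ω) (ω n) = _
          rw [hb]; rfl
        rw [hL, show -(BL v₀ n ω - 1) = 1 + -(BL v₀ n ω) by ring,
          Real.rpow_add two_pos, Real.rpow_one]
        nlinarith [sq_nonneg (Z n ω)]
      | false =>
        have h1 : Z n ω * Real.sqrt (2 - (Z n ω)^2) ≤ Z (n+1) ω := (hrec n ω).2 hb
        have hs : (0:ℝ) ≤ 2 - (Z n ω)^2 := by nlinarith
        have h0 : 0 ≤ Z n ω * Real.sqrt (2 - (Z n ω)^2) :=
          mul_nonneg hx0 (Real.sqrt_nonneg _)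
        have h2 : (Z n ω * Real.sqrt (2 - (Z n ω)^2))^2 ≤ (Z (n+1) ω)^2 :=
          pow_le_pow_left₀ h0 h1 2
        have h3 : (Z n ω * Real.sqrt (2 - (Z n ω)^2))^2 = (Z n ω)^2 * (2 - (Z n ω)^2) := by
          rw [mul_pow, Real.sq_sqrt hs]
        have hL : BL v₀ (n+1) ω = 2 * BL v₀ n ω := by
          show bstep (BL v₀ n ω) (ω n) = _
          rw [hb]; rfl
        have h4 : (1 - (Z n ω)^2)^2 ≤ ((2:ℝ)^(-(BL v₀ n ω)))^2 :=
          pow_le_pow_left₀ (by nlinarith) ih 2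
        rw [hL, show -(2 * BL v₀ n ω) = -(BL v₀ n ω) + -(BL v₀ n ω) by ring,
          Real.rpow_add two_pos]
        nlinarith
  -- the events
  set E : ℕ → Set (ℕ → Bool) := fun n => {ω | ∃ k ≤ n, BL v₀ k ω ≤ 1} with hE_def
  have hmono : Monotone E := by
    intro a b hab ω ⟨k, hk, hle⟩
    exact ⟨k, hk.trans hab, hle⟩
  have hsub : {ω | Tendsto (fun n => Z n ω) atTop (nhds 0)} ⊆ ⋃ n, E n := by
    intro ω hω
    have h2 : ∀ᶠ n in atTop, Z n ω < 1/2 := hω.eventually (gt_mem_nhds (by norm_num))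
    obtain ⟨N, hN⟩ := h2.exists
    have hx0 := (hZrange N ω).1
    have hlt : (2:ℝ)^(-1:ℝ) < (2:ℝ)^(-(BL v₀ N ω)) := by
      refine lt_of_lt_of_le ?_ (hinv ω N)
      rw [Real.rpow_neg_one]
      nlinarith
    have := (Real.rpow_lt_rpow_left_iff (by norm_num : (1:ℝ) < 2)).mp hlt
    exact Set.mem_iUnion.mpr ⟨N, N, le_refl N, by linarith⟩
  -- measure of each E n
  have hEbound : ∀ n, μ (E n) ≤ ENNReal.ofReal (2*(1+v₀)*u) := by
    intro n
    have hEeq : E n = {ω : ℕ → Bool | QQ v₀ n (fun i => ω i)} := by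
      ext ω
      constructor
      · rintro ⟨k, hk, hle⟩
        refine ⟨k, hk, ?_⟩
        rw [BL_congr v₀ k (extb n (fun i : Fin n => ω i)) ω ?_]
        · exact hle
        · intro i hi
          simp [extb, (lt_of_lt_of_le hi hk : i < n)]
      · rintro ⟨k, hk, hle⟩
        refine ⟨k, hk, ?_⟩
        rw [BL_congr v₀ k ω (extb n (fun i : Fin n => ω i)) ?_]
        · exact hle
        · intro i hi
          simp [extb, (lt_of_lt_of_le hi hk : i < n)]
    rw [hEeq]
    calc μ {ω : ℕ → Bool | QQ v₀ n (fun i => ω i)}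
        ≤ (Finset.univ.filter (QQ v₀ n)).card * (2:ENNReal)⁻¹ ^ n :=
          meas_pred_le μ hμ n (QQ v₀ n)
      _ ≤ (bcnt n v₀ : ENNReal) * (2:ENNReal)⁻¹ ^ n := by
          gcongr
          exact_mod_cast card_le_bcnt n v₀
      _ = ENNReal.ofReal ((bcnt n v₀ : ℝ) * (2⁻¹:ℝ) ^ n) := by
          rw [ENNReal.ofReal_mul (by positivity), ENNReal.ofReal_natCast,
            ENNReal.ofReal_pow (by norm_num), ENNReal.ofReal_inv_of_pos (by norm_num),
            ENNReal.ofReal_ofNat]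
      _ ≤ ENNReal.ofReal (2*(1+v₀)*u) := by
          apply ENNReal.ofReal_le_ofReal
          have h1 : (bcnt n v₀ : ℝ) ≤ 2^n * (2*(1+v₀)*u) := by
            refine (bcnt_le n v₀ hv₀).trans ?_
            rw [hpow]
            exact mul_le_mul_of_nonneg_left (min_le_right _ _) (by positivity)
          calc (bcnt n v₀ : ℝ) * (2⁻¹:ℝ)^n ≤ (2^n * (2*(1+v₀)*u)) * (2⁻¹:ℝ)^n :=
                mul_le_mul_of_nonneg_right h1 (by positivity)
            _ = (2*(1+v₀)*u) * ((2:ℝ)^n * (2⁻¹:ℝ)^n) := by ring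
            _ = 2*(1+v₀)*u := by
                rw [← mul_pow]
                norm_num
  -- assemble
  calc μ {ω | Tendsto (fun n => Z n ω) atTop (nhds 0)}
      ≤ μ (⋃ n, E n) := measure_mono hsub
    _ = ⨆ n, μ (E n) := hmono.measure_iUnion
    _ ≤ ENNReal.ofReal (2*(1+v₀)*u) := iSup_le hEbound
    _ ≤ ENNReal.ofReal ((2 / (Real.sqrt 2 - 1) ^ 2) * u * (1 + v₀)) := by
        apply ENNReal.ofReal_le_ofReal
        have hsq : (Real.sqrt 2)^2 = 2 := Real.sq_sqrt (by norm_num)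
        have hge : 1 < Real.sqrt 2 := by nlinarith [Real.sqrt_nonneg 2]
        have hs1 : (Real.sqrt 2 - 1)^2 ≤ 1 := by nlinarith
        have hs0 : 0 < (Real.sqrt 2 - 1)^2 := by nlinarith
        have hc : (2:ℝ) ≤ 2 / (Real.sqrt 2 - 1)^2 := by
          rw [le_div_iff₀ hs0]
          nlinarith
        have huv : (0:ℝ) ≤ (1+v₀)*u := by positivity
        nlinarith [mul_le_mul_of_nonneg_right hc huv]
    _ = ENNReal.ofReal ((2 / (Real.sqrt 2 - 1) ^ 2) * (1 - z ^ 2) *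
        (1 + Real.logb 2 (1 / (1 - z ^ 2)))) := rfl
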